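/- arXiv:2605.12080 — 5 statements merged into one kernel-verified Lean document; each statement's English description precedes it below -/
import Mathlib

section
/- Let (X, d) be a metric space, ι a finite index set, Δ > 0 a real number, and t, r : ι → X assignments of transmitter and receiver positions. Suppose the protocol-model separation condition holds: for all i ≠ j in ι, d(t j, r i) ≥ (1+Δ)·d(t i, r i). Then for all i ≠ j, the open ball centered at r i of radius (Δ/2)·d(t i, r i) and the open ball centered at r j of radius (Δ/2)·d(t j, r j) are disjoint. -/
/-- **Protocol-model guard disks are disjoint.**
In a metric space, if a finite family of transmitter–receiver pairs `(t i, r i)`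
satisfies the protocol-model separation condition with guard parameter `Δ > 0`
(for all `i ≠ j`, `dist (t j) (r i) ≥ (1+Δ) * dist (t i) (r i)`), then the open
balls centered at the receivers `r i` with radii `(Δ/2) * dist (t i) (r i)` are
pairwise disjoint. -/
theorem stmt_0 {X : Type*} [MetricSpace X] {ι : Type*} [Fintype ι]
    (Δ : ℝ) (hΔ : 0 < Δ) (t r : ι → X)
    (hsep : ∀ i j : ι, i ≠ j → (1 + Δ) * dist (t i) (r i) ≤ dist (t j) (r i)) :
    ∀ i j : ι, i ≠ j →
      Disjoint (Metric.ball (r i) ((Δ / 2) * dist (t i) (r i)))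
        (Metric.ball (r j) ((Δ / 2) * dist (t j) (r j))) := by
  intro i j hij
  apply Metric.ball_disjoint_ball
  have h1 := hsep i j hij
  have h2 := hsep j i hij.symm
  have t1 : dist (t j) (r i) ≤ dist (t j) (r j) + dist (r j) (r i) :=
    dist_triangle _ _ _
  have t2 : dist (t i) (r j) ≤ dist (t i) (r i) + dist (r i) (r j) :=
    dist_triangle _ _ _
  have hd : dist (r j) (r i) = dist (r i) (r j) := dist_comm _ _
  nlinarith [dist_nonneg (x := t i) (y := r i), dist_nonneg (x := t j) (y := r j)]
end

section
/- Let ι be a finite index set, Δ > 0, and t, r : ι → ℝ² (EuclideanSpace ℝ (Fin 2)) with t i ∈ [0,1]×[0,1] and r i ∈ [0,1]×[0,1] for all i. Suppose the protocol-model separation condition holds: for all i ≠ j, dist(t j, r i) ≥ (1+Δ)·dist(t i, r i). Then the total squared transmission distance in one time slot satisfies Σ_{i ∈ ι} dist(t i, r i)² ≤ 4·(1+√2·Δ)²/(π·Δ²). -/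
open Real

open MeasureTheory Metric

lemma coord_le_dist (x y : EuclideanSpace ℝ (Fin 2)) (j : Fin 2) :
    |x j - y j| ≤ dist x y := by
  rw [EuclideanSpace.dist_eq]
  have h1 : |x j - y j| = Real.sqrt (dist (x j) (y j) ^ 2) := by
    rw [Real.sqrt_sq_eq_abs, Real.dist_eq, abs_abs]
  rw [h1]
  apply Real.sqrt_le_sqrt
  exact Finset.single_le_sum (f := fun i => dist (x i) (y i) ^ 2)
    (fun i _ => sq_nonneg _) (Finset.mem_univ j)

lemma dist_le_sqrt_two (x y : EuclideanSpace ℝ (Fin 2))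
    (hx : ∀ j, x j ∈ Set.Icc (0:ℝ) 1) (hy : ∀ j, y j ∈ Set.Icc (0:ℝ) 1) :
    dist x y ≤ Real.sqrt 2 := by
  rw [EuclideanSpace.dist_eq]
  apply Real.sqrt_le_sqrt
  have : ∀ j : Fin 2, dist (x j) (y j) ^ 2 ≤ 1 := by
    intro j
    have h1 := hx j; have h2 := hy j
    rw [Real.dist_eq, sq_abs]
    nlinarith [h1.1, h1.2, h2.1, h2.2]
  calc ∑ j : Fin 2, dist (x j) (y j) ^ 2 ≤ ∑ j : Fin 2, (1:ℝ) :=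
        Finset.sum_le_sum fun j _ => this j
    _ = 2 := by simp

/-- **Total squared transmission distance bound under the protocol model.**
If transmitters `t i` and receivers `r i` all lie in the closed unit square of the
Euclidean plane and the protocol-model separation condition with guard parameter
`Δ > 0` holds (for all `i ≠ j`, `dist (t j) (r i) ≥ (1+Δ) * dist (t i) (r i)`),
then `Σ dist (t i) (r i)² ≤ 4 (1 + √2 Δ)² / (π Δ²)`. -/
theorem stmt_3 {ι : Type*} [Fintype ι]
    (Δ : ℝ) (hΔ : 0 < Δ) (t r : ι → EuclideanSpace ℝ (Fin 2))
    (ht : ∀ i, ∀ j : Fin 2, t i j ∈ Set.Icc (0 : ℝ) 1)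
    (hr : ∀ i, ∀ j : Fin 2, r i j ∈ Set.Icc (0 : ℝ) 1)
    (hsep : ∀ i j : ι, i ≠ j → (1 + Δ) * dist (t i) (r i) ≤ dist (t j) (r i)) :
    ∑ i, dist (t i) (r i) ^ 2 ≤ 4 * (1 + Real.sqrt 2 * Δ) ^ 2 / (π * Δ ^ 2) := by
  classical
  set d : ι → ℝ := fun i => dist (t i) (r i) with hd
  have hd0 : ∀ i, 0 ≤ d i := fun i => dist_nonneg
  have hdsq : ∀ i, d i ≤ Real.sqrt 2 := fun i =>
    dist_le_sqrt_two _ _ (ht i) (hr i)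
  set c : ℝ := Δ * Real.sqrt 2 / 2 with hc
  have hc0 : 0 ≤ c := by positivity
  set B : ι → Set (EuclideanSpace ℝ (Fin 2)) := fun i => Metric.ball (r i) (Δ / 2 * d i) with hB
  -- pairwise disjoint
  have hdisj : ∀ i j : ι, i ≠ j → Disjoint (B i) (B j) := by
    intro i j hij
    apply Metric.ball_disjoint_ball
    have h1 := hsep i j hij
    have h2 := hsep j i (Ne.symm hij)
    have t1 : dist (t j) (r i) ≤ dist (r i) (r j) + d j := by
      have := dist_triangle (t j) (r j) (r i)
      have e1 : dist (t j) (r j) = d j := rfl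
      rw [dist_comm (r i) (r j)]
      linarith [dist_comm (t j) (r j) ▸ this]
    have t2 : dist (t i) (r j) ≤ dist (r i) (r j) + d i := by
      have := dist_triangle (t i) (r i) (r j)
      have e1 : dist (t i) (r i) = d i := rfl
      linarith
    linarith
  -- containment in the box
  set e := (MeasurableEquiv.toLp 2 (Fin 2 → ℝ)).symm with he
  set S : Set (EuclideanSpace ℝ (Fin 2)) :=
    e ⁻¹' (Set.Icc (fun _ => -c) (fun _ => 1 + c)) with hS
  have hsub : ∀ i, B i ⊆ S := by
    intro i x hx
    simp only [hS, Set.mem_preimage, Set.mem_Icc, Pi.le_def]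
    have hxd : dist x (r i) < Δ / 2 * d i := Metric.mem_ball.mp hx
    have hxd' : dist x (r i) ≤ c := by
      have : Δ / 2 * d i ≤ c := by
        rw [hc]
        nlinarith [hdsq i]
      linarith
    constructor <;> intro j
    · have := coord_le_dist x (r i) j
      have hrj := (hr i j).1
      have hej : e x j = x j := rfl
      rw [hej]
      have := abs_le.mp (le_trans this hxd')
      linarith [this.1]
    · have := coord_le_dist x (r i) j
      have hrj := (hr i j).2
      have hej : e x j = x j := rfl
      rw [hej]
      have := abs_le.mp (le_trans this hxd')
      linarith [this.2]
  -- volume of S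
  have hvolS : volume S = ENNReal.ofReal ((1 + Real.sqrt 2 * Δ) ^ 2) := by
    rw [hS, (EuclideanSpace.volume_preserving_symm_measurableEquiv_toLp (Fin 2)).measure_preimage
      measurableSet_Icc.nullMeasurableSet, Real.volume_Icc_pi]
    simp only [Finset.prod_const, Finset.card_univ, Fintype.card_fin]
    rw [← ENNReal.ofReal_pow (by linarith)]
    congr 1
    rw [hc]; ring
  -- volume of each ball
  have hvolB : ∀ i, volume (B i) = ENNReal.ofReal (π * (Δ / 2 * d i) ^ 2) := by
    intro i
    rw [hB, EuclideanSpace.volume_ball]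
    simp only [Fintype.card_fin]
    rw [Real.sq_sqrt pi_pos.le]
    norm_num [Real.Gamma_two]
    rw [← ENNReal.ofReal_pow (by positivity), ← ENNReal.ofReal_mul (by positivity)]
    congr 1; ring
  -- sum of volumes ≤ volume S
  have hsum : ∑ i, volume (B i) ≤ volume S := by
    rw [← measure_biUnion_finset ?_ (fun i _ => measurableSet_ball)]
    · apply measure_mono
      intro x hx
      simp only [Set.mem_iUnion] at hx
      obtain ⟨i, _, hxi⟩ := hx
      exact hsub i hxi
    · intro i _ j _ hij
      exact hdisj i j hij
  rw [hvolS] at hsum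
  simp only [hvolB] at hsum
  rw [← ENNReal.ofReal_sum_of_nonneg (fun i _ => by positivity)] at hsum
  have hreal : ∑ i, π * (Δ / 2 * d i) ^ 2 ≤ (1 + Real.sqrt 2 * Δ) ^ 2 :=
    (ENNReal.ofReal_le_ofReal_iff (by positivity)).mp hsum
  have hsum2 : ∑ i, π * (Δ / 2 * d i) ^ 2 = π * Δ ^ 2 / 4 * ∑ i, d i ^ 2 := by
    rw [Finset.mul_sum]
    exact Finset.sum_congr rfl (fun i _ => by ring)
  rw [hsum2] at hreal
  have hpos : 0 < π * Δ ^ 2 := by positivity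
  show ∑ i, d i ^ 2 ≤ 4 * (1 + Real.sqrt 2 * Δ) ^ 2 / (π * Δ ^ 2)
  rw [le_div_iff₀ hpos]
  nlinarith [hreal]
end

section
/- Let X be a Binomial(n, p) random variable on a probability space, with p ∈ [0,1] and mean μ = n·p. Then for every σ > 0, P(X ≥ (1+σ)·μ) ≤ exp(−μ·σ²/(2+σ)). -/
open MeasureTheory Real

lemma two_mul_div_le_log {x : ℝ} (hx : 0 ≤ x) : 2 * x / (2 + x) ≤ Real.log (1 + x) := by
  have key : ∀ y ∈ Set.Ici (0:ℝ), 2 * y ≤ (2 + y) * Real.log (1 + y) := by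
    have hmono : MonotoneOn (fun y : ℝ => (2 + y) * Real.log (1 + y) - 2 * y) (Set.Ici 0) := by
      apply monotoneOn_of_deriv_nonneg (convex_Ici 0)
      · apply ContinuousOn.sub
        · exact (continuousOn_const.add continuousOn_id).mul
            ((Real.continuousOn_log.comp (continuousOn_const.add continuousOn_id)
              (fun y hy => by
                simp only [Set.mem_Ici] at hy
                simp only [Set.mem_compl_iff, Set.mem_singleton_iff]
                intro h; linarith)))
        · exact continuousOn_const.mul continuousOn_id
      · intro y hy
        rw [interior_Ici] at hy
        have h1 : (0:ℝ) < 1 + y := by simp only [Set.mem_Ioi] at hy; linarith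
        apply DifferentiableAt.differentiableWithinAt
        apply DifferentiableAt.sub
        · exact (differentiableAt_const _ |>.add differentiableAt_id).mul
            ((Real.differentiableAt_log h1.ne').comp y
              (differentiableAt_const _ |>.add differentiableAt_id))
        · exact (differentiableAt_const _).mul differentiableAt_id
      · intro y hy
        rw [interior_Ici] at hy
        simp only [Set.mem_Ioi] at hy
        have h1 : (0:ℝ) < 1 + y := by linarith
        have hd : HasDerivAt (fun y : ℝ => (2 + y) * Real.log (1 + y) - 2 * y)
            (1 * Real.log (1 + y) + (2 + y) * (1 / (1 + y)) - 2) y := by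
          have hlog : HasDerivAt (fun y : ℝ => Real.log (1 + y)) (1 / (1 + y)) y := by
            have := (Real.hasDerivAt_log h1.ne').comp y
              ((hasDerivAt_const y (1:ℝ)).add (hasDerivAt_id y))
            simpa [Function.comp_def] using this
          have h2 : HasDerivAt (fun y : ℝ => 2 + y) 1 y := by
            simpa [Pi.add_def] using (hasDerivAt_const y (2:ℝ)).add (hasDerivAt_id y)
          simpa [Pi.mul_def, Pi.sub_def] using (h2.mul hlog).sub ((hasDerivAt_const y (2:ℝ)).mul (hasDerivAt_id y))
        rw [hd.deriv]
        have hlog_ge : 1 - (1 + y)⁻¹ ≤ Real.log (1 + y) :=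
          Real.one_sub_inv_le_log_of_pos h1
        have : (2 + y) * (1 / (1 + y)) = 1 + (1+y)⁻¹ := by
          field_simp; ring
        rw [this]
        nlinarith [hlog_ge]
    intro y hy
    have := hmono (Set.self_mem_Ici) hy (by exact hy)
    norm_num at this
    linarith [this]
  have h2 : (0:ℝ) < 2 + x := by linarith
  rw [div_le_iff₀ h2]
  have := key x hx
  nlinarith [this, Real.log_nonneg (by linarith : (1:ℝ) ≤ 1 + x)]

/-- **Chernoff upper-tail bound for a binomial random variable.**
If `X` is a `Binomial (n, p)` random variable with mean `μ = n p`, then for every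
`σ > 0`, `P(X ≥ (1+σ) μ) ≤ exp (−μ σ² / (2+σ))`. -/
theorem stmt_4 {Ω : Type*} [MeasurableSpace Ω] (ℙ : Measure Ω) [IsProbabilityMeasure ℙ]
    (n : ℕ) (p : ℝ) (hp : p ∈ Set.Icc (0 : ℝ) 1) (X : Ω → ℕ)
    (hlaw : ∀ k : ℕ, k ≤ n →
      ℙ {ω | X ω = k} = ENNReal.ofReal ((n.choose k : ℝ) * p ^ k * (1 - p) ^ (n - k)))
    (hbound : ∀ k : ℕ, n < k → ℙ {ω | X ω = k} = 0)
    (σ : ℝ) (hσ : 0 < σ) :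
    ℙ {ω | (1 + σ) * (n * p) ≤ (X ω : ℝ)} ≤
      ENNReal.ofReal (Real.exp (-((n * p) * σ ^ 2 / (2 + σ)))) := by
  obtain ⟨hp0, hp1⟩ := hp
  set μ : ℝ := (n : ℝ) * p with hμ
  have hμ0 : 0 ≤ μ := by positivity
  set t : ℝ := Real.log (1 + σ) with ht
  have h1σ : (0:ℝ) < 1 + σ := by linarith
  have hte : Real.exp t = 1 + σ := Real.exp_log h1σ
  have ht0 : 0 ≤ t := Real.log_nonneg (by linarith)
  set pmf : ℕ → ℝ := fun k => (n.choose k : ℝ) * p ^ k * (1 - p) ^ (n - k) with hpmf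
  have hpmf0 : ∀ k, 0 ≤ pmf k := by
    intro k
    have : (0:ℝ) ≤ 1 - p := by linarith
    positivity
  set A : ℝ := t * ((1 + σ) * μ) with hA
  set b : ℕ → ℝ := fun k => if k ≤ n then pmf k * Real.exp (t * k - A) else 0 with hb
  have hb0 : ∀ k, 0 ≤ b k := by
    intro k
    by_cases h : k ≤ n
    · simp only [hb, h, if_true]
      exact mul_nonneg (hpmf0 k) (Real.exp_pos _).le
    · simp [hb, h]
  set E : Set Ω := {ω | (1 + σ) * μ ≤ (X ω : ℝ)} with hE
  -- Step A: measure bound by tsum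
  have stepA : ℙ E ≤ ∑' k, ENNReal.ofReal (b k) := by
    have hsub : E ⊆ ⋃ k, ({ω | X ω = k} ∩ E) := by
      intro ω hω
      exact Set.mem_iUnion.2 ⟨X ω, rfl, hω⟩
    refine le_trans (measure_mono hsub) (le_trans (measure_iUnion_le _) ?_)
    refine ENNReal.tsum_le_tsum fun k => ?_
    by_cases hkn : k ≤ n
    · by_cases hkE : (1 + σ) * μ ≤ (k : ℝ)
      · refine le_trans (measure_mono Set.inter_subset_left) ?_
        rw [hlaw k hkn]
        apply ENNReal.ofReal_le_ofReal
        have h1 : (1:ℝ) ≤ Real.exp (t * k - A) := by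
          rw [hA]
          apply Real.one_le_exp
          nlinarith [mul_le_mul_of_nonneg_left hkE ht0]
        simp only [hb, hkn, if_true]
        exact le_mul_of_one_le_right (hpmf0 k) h1
      · have hempty : {ω | X ω = k} ∩ E = ∅ := by
          ext ω
          simp only [Set.mem_inter_iff, Set.mem_setOf_eq, Set.mem_empty_iff_false,
            iff_false, not_and, hE]
          intro h1 h2
          rw [h1] at h2
          exact hkE h2
        rw [hempty, measure_empty]
        exact zero_le
    · refine le_trans (measure_mono Set.inter_subset_left) ?_
      rw [hbound k (lt_of_not_ge hkn)]
      exact zero_le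
  -- Step B: tsum = ofReal of finite sum
  have stepB : ∑' k, ENNReal.ofReal (b k)
      = ENNReal.ofReal (∑ k ∈ Finset.range (n + 1), b k) := by
    rw [tsum_eq_sum (s := Finset.range (n + 1)) (by
      intro k hk
      have : ¬ k ≤ n := by
        simpa [Nat.lt_succ_iff] using hk
      simp [hb, this])]
    exact (ENNReal.ofReal_sum_of_nonneg fun k _ => hb0 k).symm
  -- Step C: finite sum bound
  have stepC : ∑ k ∈ Finset.range (n + 1), b k ≤ Real.exp (-(μ * σ ^ 2 / (2 + σ))) := by
    have hterm : ∀ k ∈ Finset.range (n + 1),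
        b k = pmf k * (Real.exp t) ^ k * Real.exp (-A) := by
      intro k hk
      have hkn : k ≤ n := Nat.lt_succ_iff.mp (Finset.mem_range.mp hk)
      simp only [hb, hkn, if_true]
      rw [sub_eq_add_neg, Real.exp_add, mul_comm t (k:ℝ), Real.exp_nat_mul]
      simp only [hpmf]
      ring
    rw [Finset.sum_congr rfl hterm, ← Finset.sum_mul]
    have hsum : ∑ k ∈ Finset.range (n + 1), pmf k * (Real.exp t) ^ k
        = (p * Real.exp t + (1 - p)) ^ n := by
      rw [add_pow]
      refine Finset.sum_congr rfl fun k _ => ?_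
      rw [mul_pow]
      simp only [hpmf]
      ring
    rw [hsum]
    have hbase : p * Real.exp t + (1 - p) ≤ Real.exp (p * (Real.exp t - 1)) := by
      have := Real.add_one_le_exp (p * (Real.exp t - 1))
      linarith
    have hbase0 : 0 ≤ p * Real.exp t + (1 - p) := by
      have : (0:ℝ) ≤ p * Real.exp t := by positivity
      linarith
    have hpow : (p * Real.exp t + (1 - p)) ^ n ≤ Real.exp (μ * (Real.exp t - 1)) := by
      calc (p * Real.exp t + (1 - p)) ^ n
          ≤ (Real.exp (p * (Real.exp t - 1))) ^ n := pow_le_pow_left₀ hbase0 hbase n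
        _ = Real.exp ((n : ℝ) * (p * (Real.exp t - 1))) := (Real.exp_nat_mul _ n).symm
        _ = Real.exp (μ * (Real.exp t - 1)) := by rw [hμ]; ring_nf
    have key : μ * (Real.exp t - 1) - A ≤ -(μ * σ ^ 2 / (2 + σ)) := by
      have h2σ : (0:ℝ) < 2 + σ := by linarith
      have hlog : 2 * σ ≤ t * (2 + σ) := by
        have := two_mul_div_le_log hσ.le
        rw [div_le_iff₀ h2σ] at this
        linarith
      have hkey1 : σ - (1 + σ) * t ≤ -(σ ^ 2 / (2 + σ)) := by
        have hmain : (σ - (1 + σ) * t) * (2 + σ) ≤ -σ ^ 2 := by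
          nlinarith [mul_le_mul_of_nonneg_left hlog (by linarith : (0:ℝ) ≤ 1 + σ)]
        calc σ - (1 + σ) * t = (σ - (1 + σ) * t) * (2 + σ) / (2 + σ) := by
              field_simp
          _ ≤ -σ ^ 2 / (2 + σ) := by
              exact div_le_div_of_nonneg_right hmain h2σ.le
          _ = -(σ ^ 2 / (2 + σ)) := neg_div _ _
      have := mul_le_mul_of_nonneg_left hkey1 hμ0
      rw [hA, hte]
      rw [mul_div_assoc, ← mul_neg]
      nlinarith [this]
    calc (p * Real.exp t + (1 - p)) ^ n * Real.exp (-A)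
        ≤ Real.exp (μ * (Real.exp t - 1)) * Real.exp (-A) :=
          mul_le_mul_of_nonneg_right hpow (Real.exp_pos _).le
      _ = Real.exp (μ * (Real.exp t - 1) - A) := by rw [← Real.exp_add]; ring_nf
      _ ≤ Real.exp (-(μ * σ ^ 2 / (2 + σ))) := Real.exp_le_exp.2 key
  calc ℙ E ≤ ∑' k, ENNReal.ofReal (b k) := stepA
    _ = ENNReal.ofReal (∑ k ∈ Finset.range (n + 1), b k) := stepB
    _ ≤ ENNReal.ofReal (Real.exp (-(μ * σ ^ 2 / (2 + σ)))) :=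
        ENNReal.ofReal_le_ofReal stepC
end

section
/- Let k ≥ 1 and n ≥ 1 be natural numbers, q ∈ [0,1), and σ ∈ (0,1). On a probability space let X₁, …, X_n be i.i.d. random points uniformly distributed on the unit square [0,1]² ⊂ ℝ², let B₁, …, B_n be i.i.d. Bernoulli random variables with success probability 1−q, and assume the whole family (X₁,…,X_n,B₁,…,B_n) is mutually independent. Partition [0,1)² into the k² half-open grid cells S_{u,v} = [u/k,(u+1)/k) × [v/k,(v+1)/k) for 0 ≤ u,v < k, let N_{u,v} = #{i : B_i = 1 and X_i ∈ S_{u,v}} be the number of non-faulty nodes in cell (u,v), and let μ = n·(1−q)/k². Then the probability that some cell satisfies N_{u,v} < (1−σ)·μ or N_{u,v} > (1+σ)·μ is at most k²·(exp(−μ·σ²/2) + exp(−μ·σ²/(2+σ))). -/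
open MeasureTheory Real
open scoped Classical

/-- The value space of the combined family `(X₁,…,X_n, B₁,…,B_n)`:
positions in `ℝ²` for the left summands, Bernoulli marks for the right ones. -/
def NodeVal (n : ℕ) : Fin n ⊕ Fin n → Type
  | .inl _ => ℝ × ℝ
  | .inr _ => Bool

instance (n : ℕ) : ∀ s : Fin n ⊕ Fin n, MeasurableSpace (NodeVal n s)
  | .inl _ => inferInstanceAs (MeasurableSpace (ℝ × ℝ))
  | .inr _ => inferInstanceAs (MeasurableSpace Bool)

/-- The half-open grid cell `S_{u,v} = [u/k,(u+1)/k) × [v/k,(v+1)/k)` of the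
partition of `[0,1)²` into `k²` cells. -/
def gridCell (k : ℕ) (u v : Fin k) : Set (ℝ × ℝ) :=
  Set.Ico ((u : ℝ) / k) (((u : ℝ) + 1) / k) ×ˢ Set.Ico ((v : ℝ) / k) (((v : ℝ) + 1) / k)


section AuxLemmas

lemma aux_log_lower {x : ℝ} (h0 : 0 < x) (h1 : x ≤ 1) : (x - x⁻¹)/2 ≤ Real.log x := by
  set f : ℝ → ℝ := fun y => Real.log y - (y - y⁻¹)/2 with hf
  have hder : ∀ y ∈ Set.Ioo x 1, HasDerivAt f (y⁻¹ - (1 + y⁻¹^2)/2) y := by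
    intro y hy
    have hy0 : 0 < y := lt_trans h0 hy.1
    have h1' : HasDerivAt Real.log y⁻¹ y := Real.hasDerivAt_log hy0.ne'
    have h2 : HasDerivAt (fun y : ℝ => (y - y⁻¹)/2) ((1 - (-(y^2)⁻¹))/2) y := by
      have := ((hasDerivAt_id y).sub (hasDerivAt_inv hy0.ne')).div_const 2
      simpa using this
    have := h1'.sub h2
    refine this.congr_deriv ?_
    have h3 : (y^2)⁻¹ = y⁻¹^2 := by rw [inv_pow]
    rw [h3]; ring
  have hanti : AntitoneOn f (Set.Icc x 1) := by
    apply antitoneOn_of_deriv_nonpos (convex_Icc x 1)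
    · apply ContinuousOn.sub
      · exact Real.continuousOn_log.mono (by
          intro y hy; simp only [Set.mem_compl_iff, Set.mem_singleton_iff]
          exact (lt_of_lt_of_le h0 hy.1).ne')
      · apply ContinuousOn.div_const
        apply ContinuousOn.sub continuousOn_id
        exact ContinuousOn.inv₀ continuousOn_id (fun y hy => (lt_of_lt_of_le h0 hy.1).ne')
    · intro y hy
      rw [interior_Icc] at hy
      exact (hder y hy).differentiableAt.differentiableWithinAt
    · intro y hy
      rw [interior_Icc] at hy
      rw [(hder y hy).deriv]
      nlinarith [sq_nonneg (y⁻¹ - 1)]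
  have hx1 : x ∈ Set.Icc x 1 := ⟨le_refl x, h1⟩
  have h11 : (1 : ℝ) ∈ Set.Icc x 1 := ⟨h1, le_refl 1⟩
  have hh := hanti hx1 h11 h1
  have hf1 : f 1 = 0 := by simp [hf]
  have hfx : f x = Real.log x - (x - x⁻¹)/2 := rfl
  rw [hf1, hfx] at hh
  linarith

lemma aux_log_pade {σ : ℝ} (h : 0 ≤ σ) : 2*σ/(2+σ) ≤ Real.log (1+σ) := by
  set f : ℝ → ℝ := fun y => Real.log (1+y) - 2*y/(2+y) with hf
  have hder : ∀ y ∈ Set.Ioo 0 σ, HasDerivAt f ((1+y)⁻¹ - 4/(2+y)^2) y := by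
    intro y hy
    have hy0 : (0:ℝ) < y := hy.1
    have h1p : (0:ℝ) < 1 + y := by linarith
    have h2p : (0:ℝ) < 2 + y := by linarith
    have h1' : HasDerivAt (fun y : ℝ => Real.log (1+y)) ((1+y)⁻¹) y := by
      have := (Real.hasDerivAt_log h1p.ne').comp y ((hasDerivAt_id y).const_add 1)
      exact this.congr_deriv (mul_one _)
    have h2 : HasDerivAt (fun y : ℝ => 2*y/(2+y)) ((2*1*(2+y) - 2*y*1)/(2+y)^2) y := by
      have := ((hasDerivAt_id y).const_mul 2).div ((hasDerivAt_id y).const_add 2) h2p.ne'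
      exact this
    have := h1'.sub h2
    refine this.congr_deriv ?_
    ring
  have hmono : MonotoneOn f (Set.Icc 0 σ) := by
    apply monotoneOn_of_deriv_nonneg (convex_Icc 0 σ)
    · apply ContinuousOn.sub
      · apply ContinuousOn.log
        · exact (continuousOn_const.add continuousOn_id)
        · intro y hy; have := hy.1; simp at this ⊢; linarith
      · apply ContinuousOn.div (continuousOn_const.mul continuousOn_id)
          (continuousOn_const.add continuousOn_id)
        intro y hy; have := hy.1; simp at this ⊢; linarith
    · intro y hy
      rw [interior_Icc] at hy
      exact (hder y hy).differentiableAt.differentiableWithinAt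
    · intro y hy
      rw [interior_Icc] at hy
      rw [(hder y hy).deriv]
      have hy0 : (0:ℝ) < y := hy.1
      have h1p : (0:ℝ) < 1 + y := by linarith
      have h2p : (0:ℝ) < 2 + y := by linarith
      rw [sub_nonneg, inv_eq_one_div, div_le_div_iff₀ (by positivity) h1p]
      nlinarith [sq_nonneg y]
  rcases eq_or_lt_of_le h with h'|h'
  · simp [← h']
  have h01 : (0:ℝ) ∈ Set.Icc 0 σ := ⟨le_refl 0, h⟩
  have hs : σ ∈ Set.Icc 0 σ := ⟨h, le_refl σ⟩
  have hh := hmono h01 hs h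
  have hf0 : f 0 = 0 := by simp [hf]
  have hfs : f σ = Real.log (1+σ) - 2*σ/(2+σ) := rfl
  rw [hf0, hfs] at hh
  linarith

section chern
variable {Ω : Type*} [MeasurableSpace Ω] (ℙ : Measure Ω) [IsProbabilityMeasure ℙ]
  {n : ℕ} (A : Fin n → Set Ω)

lemma aux_mgf_sum (hA : ∀ i, MeasurableSet (A i))
    (hInd : ProbabilityTheory.iIndepSet A ℙ) {p : ℝ} (hp0 : 0 ≤ p)
    (hp : ∀ i, ℙ (A i) = ENNReal.ofReal p) (t : ℝ) :
    ProbabilityTheory.mgf (∑ i, (A i).indicator (fun _ => (1:ℝ))) ℙ t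
      = (1 + (Real.exp t - 1) * p) ^ n := by
  have hY : ∀ i, Measurable ((A i).indicator (fun _ => (1:ℝ))) :=
    fun i => measurable_const.indicator (hA i)
  rw [ProbabilityTheory.iIndepFun.mgf_sum hInd.iIndepFun_indicator hY Finset.univ]
  have hone : ∀ i, ProbabilityTheory.mgf ((A i).indicator fun _ => (1:ℝ)) ℙ t
      = 1 + (Real.exp t - 1) * p := by
    intro i
    have heq : ∀ ω, Real.exp (t * (A i).indicator (fun _ => (1:ℝ)) ω)
        = 1 + (Real.exp t - 1) * (A i).indicator (fun _ => (1:ℝ)) ω := by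
      intro ω
      by_cases h : ω ∈ A i <;> simp [Set.indicator_apply, h]
    unfold ProbabilityTheory.mgf
    simp_rw [heq]
    rw [integral_add (integrable_const 1)
      (((integrable_const (1:ℝ)).indicator (hA i)).const_mul _),
      integral_const, integral_const_mul]
    have hind : ∫ a, (A i).indicator (fun _ => (1:ℝ)) a ∂ℙ = (ℙ (A i)).toReal :=
      integral_indicator_one (hA i)
    rw [hind, hp i, ENNReal.toReal_ofReal hp0]
    simp
  simp_rw [hone]
  rw [Finset.prod_const, Finset.card_univ, Fintype.card_fin]

lemma aux_int (t : ℝ) (hA : ∀ i, MeasurableSet (A i)) :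
    Integrable (fun ω => Real.exp (t * (∑ i, (A i).indicator (fun _ => (1:ℝ))) ω)) ℙ := by
  have hY : ∀ i, Measurable ((A i).indicator (fun _ => (1:ℝ))) :=
    fun i => measurable_const.indicator (hA i)
  have hS : Measurable (∑ i, (A i).indicator (fun _ => (1:ℝ))) := by
    rw [Finset.sum_fn]
    exact Finset.measurable_sum Finset.univ (fun i _ => hY i)
  have hb : ∀ ω, 0 ≤ (∑ i, (A i).indicator (fun _ => (1:ℝ))) ω ∧
      (∑ i, (A i).indicator (fun _ => (1:ℝ))) ω ≤ n := by
    intro ω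
    rw [Finset.sum_apply]
    constructor
    · exact Finset.sum_nonneg fun i _ => Set.indicator_nonneg (fun _ _ => zero_le_one) ω
    · calc (∑ i, (A i).indicator (fun _ => (1:ℝ)) ω) ≤ ∑ _i : Fin n, (1:ℝ) := by
            apply Finset.sum_le_sum
            intro i _
            exact Set.indicator_le_self' (fun _ _ => zero_le_one) ω |>.trans (by
              by_cases h : ω ∈ A i <;> simp [Set.indicator_apply, h])
          _ = n := by simp
  refine Integrable.mono' (integrable_const (Real.exp (|t| * n))) ?_ (ae_of_all _ ?_)
  · exact (hS.const_mul t).exp.aestronglyMeasurable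
  · intro ω
    rw [Real.norm_eq_abs, Real.abs_exp, Real.exp_le_exp]
    calc t * (∑ i, (A i).indicator (fun _ => (1:ℝ))) ω
        ≤ |t * (∑ i, (A i).indicator (fun _ => (1:ℝ))) ω| := le_abs_self _
      _ = |t| * |(∑ i, (A i).indicator (fun _ => (1:ℝ))) ω| := abs_mul _ _
      _ ≤ |t| * n := by
          apply mul_le_mul_of_nonneg_left _ (abs_nonneg t)
          rw [abs_of_nonneg (hb ω).1]; exact (hb ω).2

lemma chernoff_low (hA : ∀ i, MeasurableSet (A i))
    (hInd : ProbabilityTheory.iIndepSet A ℙ) {p σ : ℝ}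
    (hp0 : 0 ≤ p) (hp1 : p ≤ 1)
    (hp : ∀ i, ℙ (A i) = ENNReal.ofReal p) (hσ : σ ∈ Set.Ioo (0:ℝ) 1) :
    ℙ {ω | (∑ i, (A i).indicator (fun _ => (1:ℝ))) ω ≤ (1-σ)*(n*p)} ≤
      ENNReal.ofReal (Real.exp (-(n*p) * σ^2/2)) := by
  obtain ⟨hσ0, hσ1⟩ := hσ
  set t : ℝ := Real.log (1-σ) with ht_def
  have ht : t ≤ 0 := Real.log_nonpos (by linarith) (by linarith)
  have het : Real.exp t = 1 - σ := Real.exp_log (by linarith)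
  have h_int := aux_int ℙ A t hA
  have hcher := ProbabilityTheory.measure_le_le_exp_mul_mgf (μ := ℙ)
    (X := ∑ i, (A i).indicator (fun _ => (1:ℝ))) ((1-σ)*(n*p)) ht h_int
  rw [aux_mgf_sum ℙ A hA hInd hp0 hp t] at hcher
  have hM : (0:ℝ) ≤ n*p := by positivity
  have hfinal : Real.exp (-t * ((1-σ)*(n*p))) * (1 + (Real.exp t - 1) * p) ^ n
      ≤ Real.exp (-(n*p) * σ^2/2) := by
    have h1 : (1 + (Real.exp t - 1) * p) ^ n ≤ Real.exp (-(σ*p)) ^ n := by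
      apply pow_le_pow_left₀
      · rw [het]; nlinarith
      · rw [het]
        have := Real.add_one_le_exp (-(σ*p)); linarith
    have h2 : Real.exp (-(σ*p)) ^ n = Real.exp (-(σ*p)*n) := by
      rw [mul_comm (-(σ*p)) (n:ℝ), Real.exp_nat_mul]
    calc Real.exp (-t * ((1-σ)*(n*p))) * (1 + (Real.exp t - 1) * p) ^ n
        ≤ Real.exp (-t * ((1-σ)*(n*p))) * Real.exp (-(σ*p)*n) := by
          rw [← h2]; exact mul_le_mul_of_nonneg_left h1 (Real.exp_pos _).le
      _ = Real.exp (-t * ((1-σ)*(n*p)) + -(σ*p)*n) := (Real.exp_add _ _).symm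
      _ ≤ Real.exp (-(n*p) * σ^2/2) := by
          rw [Real.exp_le_exp]
          have hlog := aux_log_lower (x := 1-σ) (by linarith) (by linarith)
          have hx : (0:ℝ) ≤ 1 - σ := by linarith
          have hl2 := mul_le_mul_of_nonneg_right hlog hx
          have hinv : (1-σ) * (1-σ)⁻¹ = 1 := mul_inv_cancel₀ (by linarith)
          have hkey : σ^2/2 - σ ≤ t * (1-σ) := by nlinarith
          nlinarith [mul_le_mul_of_nonneg_left hkey hM]
  calc ℙ {ω | (∑ i, (A i).indicator (fun _ => (1:ℝ))) ω ≤ (1-σ)*(n*p)}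
      = ENNReal.ofReal (ℙ {ω | (∑ i, (A i).indicator (fun _ => (1:ℝ))) ω ≤ (1-σ)*(n*p)}).toReal :=
        (ENNReal.ofReal_toReal (measure_ne_top _ _)).symm
    _ ≤ ENNReal.ofReal (Real.exp (-(n*p) * σ^2/2)) :=
        ENNReal.ofReal_le_ofReal (hcher.trans hfinal)

lemma chernoff_high (hA : ∀ i, MeasurableSet (A i))
    (hInd : ProbabilityTheory.iIndepSet A ℙ) {p σ : ℝ}
    (hp0 : 0 ≤ p) (hp1 : p ≤ 1)
    (hp : ∀ i, ℙ (A i) = ENNReal.ofReal p) (hσ : σ ∈ Set.Ioo (0:ℝ) 1) :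
    ℙ {ω | (1+σ)*(n*p) ≤ (∑ i, (A i).indicator (fun _ => (1:ℝ))) ω} ≤
      ENNReal.ofReal (Real.exp (-(n*p) * σ^2/(2+σ))) := by
  obtain ⟨hσ0, hσ1⟩ := hσ
  set t : ℝ := Real.log (1+σ) with ht_def
  have ht : 0 ≤ t := Real.log_nonneg (by linarith)
  have het : Real.exp t = 1 + σ := Real.exp_log (by linarith)
  have h_int := aux_int ℙ A t hA
  have hcher := ProbabilityTheory.measure_ge_le_exp_mul_mgf (μ := ℙ)
    (X := ∑ i, (A i).indicator (fun _ => (1:ℝ))) ((1+σ)*(n*p)) ht h_int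
  rw [aux_mgf_sum ℙ A hA hInd hp0 hp t] at hcher
  have hM : (0:ℝ) ≤ n*p := by positivity
  have hfinal : Real.exp (-t * ((1+σ)*(n*p))) * (1 + (Real.exp t - 1) * p) ^ n
      ≤ Real.exp (-(n*p) * σ^2/(2+σ)) := by
    have h1 : (1 + (Real.exp t - 1) * p) ^ n ≤ Real.exp (σ*p) ^ n := by
      apply pow_le_pow_left₀
      · rw [het]; nlinarith
      · rw [het]
        have := Real.add_one_le_exp (σ*p); linarith
    have h2 : Real.exp (σ*p) ^ n = Real.exp ((σ*p)*n) := by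
      rw [mul_comm ((σ*p)) (n:ℝ), Real.exp_nat_mul]
    calc Real.exp (-t * ((1+σ)*(n*p))) * (1 + (Real.exp t - 1) * p) ^ n
        ≤ Real.exp (-t * ((1+σ)*(n*p))) * Real.exp ((σ*p)*n) := by
          rw [← h2]; exact mul_le_mul_of_nonneg_left h1 (Real.exp_pos _).le
      _ = Real.exp (-t * ((1+σ)*(n*p)) + (σ*p)*n) := (Real.exp_add _ _).symm
      _ ≤ Real.exp (-(n*p) * σ^2/(2+σ)) := by
          rw [Real.exp_le_exp]
          have hlog := aux_log_pade hσ0.le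
          have hl2 := mul_le_mul_of_nonneg_left hlog (by linarith : (0:ℝ) ≤ 1+σ)
          have hrw : (1+σ)*(2*σ/(2+σ)) - σ = σ^2/(2+σ) := by
            field_simp; ring
          have hkey : σ^2/(2+σ) ≤ (1+σ)*t - σ := by
            rw [← hrw]; linarith
          have hgoal : -(↑n*p)*σ^2/(2+σ) = -((↑n*p) * (σ^2/(2+σ))) := by ring
          rw [hgoal]
          nlinarith [mul_le_mul_of_nonneg_left hkey hM]
  calc ℙ {ω | (1+σ)*(n*p) ≤ (∑ i, (A i).indicator (fun _ => (1:ℝ))) ω}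
      = ENNReal.ofReal (ℙ {ω | (1+σ)*(n*p) ≤ (∑ i, (A i).indicator (fun _ => (1:ℝ))) ω}).toReal :=
        (ENNReal.ofReal_toReal (measure_ne_top _ _)).symm
    _ ≤ ENNReal.ofReal (Real.exp (-(n*p) * σ^2/(2+σ))) :=
        ENNReal.ofReal_le_ofReal (hcher.trans hfinal)

end chern


/-- The sets used to test independence on the combined family. -/
def cellSets (n k : ℕ) (u v : Fin k) : ∀ s : Fin n ⊕ Fin n, Set (NodeVal n s)
  | .inl _ => gridCell k u v
  | .inr _ => {true}


/-- **Uniform concentration of the number of non-faulty nodes in every grid cell.**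
`n` nodes are placed i.i.d. uniformly on the unit square, each node is independently
non-faulty with probability `1 − q`, and the whole family `(X₁,…,X_n,B₁,…,B_n)` is
mutually independent.  With `μ = n (1−q) / k²`, the probability that some of the `k²`
grid cells contains fewer than `(1−σ) μ` or more than `(1+σ) μ` non-faulty nodes is
at most `k² (exp (−μσ²/2) + exp (−μσ²/(2+σ)))`. -/
theorem stmt_7 {Ω : Type*} [MeasurableSpace Ω] (ℙ : Measure Ω) [IsProbabilityMeasure ℙ]
    (k n : ℕ) (hk : 1 ≤ k) (hn : 1 ≤ n)
    (q : ℝ) (hq : q ∈ Set.Ico (0 : ℝ) 1) (σ : ℝ) (hσ : σ ∈ Set.Ioo (0 : ℝ) 1)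
    (X : Fin n → Ω → ℝ × ℝ) (B : Fin n → Ω → Bool)
    (hXmeas : ∀ i, Measurable (X i)) (hBmeas : ∀ i, Measurable (B i))
    (hXlaw : ∀ i, Measure.map (X i) ℙ =
      volume.restrict (Set.Icc (0 : ℝ) 1 ×ˢ Set.Icc (0 : ℝ) 1))
    (hBlaw : ∀ i, ℙ {ω | B i ω = true} = ENNReal.ofReal (1 - q))
    (hIndep : ProbabilityTheory.iIndepFun
      (fun s : Fin n ⊕ Fin n => (match s with
        | Sum.inl i => X i
        | Sum.inr i => B i : Ω → NodeVal n s)) ℙ) :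
    ℙ {ω | ∃ u v : Fin k,
        ((Finset.univ.filter
            (fun i : Fin n => B i ω = true ∧ X i ω ∈ gridCell k u v)).card : ℝ)
            < (1 - σ) * (n * (1 - q) / k ^ 2) ∨
        ((Finset.univ.filter
            (fun i : Fin n => B i ω = true ∧ X i ω ∈ gridCell k u v)).card : ℝ)
            > (1 + σ) * (n * (1 - q) / k ^ 2)} ≤
      ENNReal.ofReal ((k : ℝ) ^ 2 *
        (Real.exp (-(n * (1 - q) / k ^ 2) * σ ^ 2 / 2) +
         Real.exp (-(n * (1 - q) / k ^ 2) * σ ^ 2 / (2 + σ)))) := by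
  have hk0 : (0:ℝ) < k := by exact_mod_cast hk
  have hq1 : (0:ℝ) ≤ 1 - q := by have := hq.2; linarith
  set p : ℝ := (1 - q) / k ^ 2 with hp_def
  have hp0 : 0 ≤ p := by positivity
  have hk1 : (1:ℝ) ≤ (k:ℝ) := by exact_mod_cast hk
  have hp1 : p ≤ 1 := by
    rw [hp_def, div_le_one (by positivity)]
    nlinarith [hq.1]
  have hμ : (n:ℝ) * (1 - q) / k ^ 2 = n * p := by rw [hp_def]; ring
  -- the cell events
  set A : Fin k → Fin k → Fin n → Set Ω :=
    fun u v i => {ω | B i ω = true ∧ X i ω ∈ gridCell k u v} with hA_def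
  have hcellmeas : ∀ u v : Fin k, MeasurableSet (gridCell k u v) :=
    fun u v => measurableSet_Ico.prod measurableSet_Ico
  have hA_eq : ∀ u v i, A u v i = B i ⁻¹' {true} ∩ X i ⁻¹' gridCell k u v := by
    intro u v i; ext ω; simp [hA_def]
  have hAmeas : ∀ u v i, MeasurableSet (A u v i) := by
    intro u v i
    rw [hA_eq]
    exact ((hBmeas i) (measurableSet_singleton true)).inter ((hXmeas i) (hcellmeas u v))
  -- cell volume
  have hcellsub : ∀ u v : Fin k, gridCell k u v ⊆ Set.Icc (0:ℝ) 1 ×ˢ Set.Icc (0:ℝ) 1 := by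
    intro u v z hz
    obtain ⟨⟨h1, h2⟩, ⟨h3, h4⟩⟩ := hz
    have hu : (u:ℝ) + 1 ≤ k := by exact_mod_cast u.isLt
    have hv : (v:ℝ) + 1 ≤ k := by exact_mod_cast v.isLt
    have hu0 : (0:ℝ) ≤ (u:ℝ) := by positivity
    have hv0 : (0:ℝ) ≤ (v:ℝ) := by positivity
    constructor
    · constructor
      · exact le_trans (by positivity) h1
      · exact le_of_lt (lt_of_lt_of_le h2 (by rw [div_le_one hk0]; linarith))
    · constructor
      · exact le_trans (by positivity) h3
      · exact le_of_lt (lt_of_lt_of_le h4 (by rw [div_le_one hk0]; linarith))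
  have hvol : ∀ u v : Fin k, (volume : Measure (ℝ × ℝ)) (gridCell k u v)
      = ENNReal.ofReal (1 / k ^ 2) := by
    intro u v
    rw [gridCell, MeasureTheory.Measure.volume_eq_prod, Measure.prod_prod,
      Real.volume_Ico, Real.volume_Ico]
    have h1 : ((u:ℝ) + 1) / k - (u:ℝ) / k = 1 / k := by field_simp; ring
    have h2 : ((v:ℝ) + 1) / k - (v:ℝ) / k = 1 / k := by field_simp; ring
    rw [h1, h2, ← ENNReal.ofReal_mul (by positivity)]
    congr 1
    field_simp
  have hXcell : ∀ u v : Fin k, ∀ i, ℙ (X i ⁻¹' gridCell k u v) = ENNReal.ofReal (1 / k ^ 2) := by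
    intro u v i
    rw [← Measure.map_apply (hXmeas i) (hcellmeas u v), hXlaw i,
      Measure.restrict_apply (hcellmeas u v),
      Set.inter_eq_self_of_subset_left (hcellsub u v), hvol u v]
  have hBtrue : ∀ i, ℙ (B i ⁻¹' {true}) = ENNReal.ofReal (1 - q) := by
    intro i
    have : B i ⁻¹' {true} = {ω | B i ω = true} := by ext ω; simp
    rw [this, hBlaw i]
  -- the family in hIndep
  set F : ∀ s : Fin n ⊕ Fin n, Ω → NodeVal n s :=
    fun s => (match s with
        | Sum.inl i => X i
        | Sum.inr i => B i : Ω → NodeVal n s) with hF_def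
  -- pairwise independence of X i and B i
  have hpair : ∀ u v : Fin k, ∀ i, ℙ (A u v i)
      = ℙ (B i ⁻¹' {true}) * ℙ (X i ⁻¹' gridCell k u v) := by
    intro u v i
    have hij : (Sum.inr i : Fin n ⊕ Fin n) ≠ Sum.inl i := by simp
    have hInd2 := hIndep.indepFun hij
    have := hInd2.measure_inter_preimage_eq_mul
      ({true} : Set (NodeVal n (Sum.inr i))) (gridCell k u v)
      (measurableSet_singleton true) (hcellmeas u v)
    rw [hA_eq]
    exact this
  have hpA : ∀ u v : Fin k, ∀ i, ℙ (A u v i) = ENNReal.ofReal p := by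
    intro u v i
    rw [hpair u v i, hBtrue i, hXcell u v i, ← ENNReal.ofReal_mul hq1, hp_def]
    congr 1
    ring
  -- mutual independence of the events A u v
  have hiset : ∀ u v : Fin k, ProbabilityTheory.iIndepSet (A u v) ℙ := by
    intro u v
    rw [ProbabilityTheory.iIndepSet_iff_meas_biInter (hAmeas u v)]
    intro S
    have hsets_meas : ∀ s : Fin n ⊕ Fin n,
        s ∈ (S.image Sum.inl ∪ S.image Sum.inr) → MeasurableSet (cellSets n k u v s) := by
      intro s _
      match s with
      | Sum.inl i => exact hcellmeas u v
      | Sum.inr i => exact (measurableSet_singleton true)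
    have hmain := hIndep.measure_inter_preimage_eq_mul
      (S := S.image Sum.inl ∪ S.image Sum.inr) (sets := cellSets n k u v) hsets_meas
    have hset_eq : (⋂ s ∈ (S.image Sum.inl ∪ S.image Sum.inr), F s ⁻¹' cellSets n k u v s)
        = ⋂ i ∈ S, A u v i := by
      ext ω
      simp only [Set.mem_iInter, Finset.mem_union, Finset.mem_image, Set.mem_preimage]
      constructor
      · intro h i hi
        have h1 := h (Sum.inl i) (Or.inl ⟨i, hi, rfl⟩)
        have h2 := h (Sum.inr i) (Or.inr ⟨i, hi, rfl⟩)
        exact ⟨h2, h1⟩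
      · intro h s hs
        rcases hs with ⟨i, hi, rfl⟩ | ⟨i, hi, rfl⟩
        · exact (h i hi).2
        · exact (h i hi).1
    have hdisj : Disjoint (S.image (Sum.inl : Fin n → Fin n ⊕ Fin n)) (S.image Sum.inr) := by
      rw [Finset.disjoint_left]
      intro s hs ht
      simp only [Finset.mem_image] at hs ht
      obtain ⟨i, _, rfl⟩ := hs
      obtain ⟨j, _, hj⟩ := ht
      simp at hj
    rw [hset_eq] at hmain
    rw [hmain, Finset.prod_union hdisj,
      Finset.prod_image (fun a _ b _ h => Sum.inl_injective h),
      Finset.prod_image (fun a _ b _ h => Sum.inr_injective h)]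
    rw [← Finset.prod_mul_distrib]
    apply Finset.prod_congr rfl
    intro i _
    have h1 : F (Sum.inl i) ⁻¹' cellSets n k u v (Sum.inl i) = X i ⁻¹' gridCell k u v := rfl
    have h2 : F (Sum.inr i) ⁻¹' cellSets n k u v (Sum.inr i) = B i ⁻¹' {true} := rfl
    rw [h1, h2, hpair u v i, mul_comm]
  -- card = sum of indicators
  have hcard : ∀ (u v : Fin k) (ω : Ω),
      ((Finset.univ.filter
        (fun i : Fin n => B i ω = true ∧ X i ω ∈ gridCell k u v)).card : ℝ)
      = (∑ i, (A u v i).indicator (fun _ => (1:ℝ))) ω := by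
    intro u v ω
    rw [Finset.sum_apply, Finset.card_filter]
    push_cast
    apply Finset.sum_congr rfl
    intro i _
    by_cases h : B i ω = true ∧ X i ω ∈ gridCell k u v
    · have : ω ∈ A u v i := h
      simp [Set.indicator_apply, this, h]
    · have : ω ∉ A u v i := h
      simp [Set.indicator_apply, this, h]
  -- the union bound
  set e1 : ℝ := Real.exp (-((n:ℝ)*p) * σ ^ 2 / 2) with he1
  set e2 : ℝ := Real.exp (-((n:ℝ)*p) * σ ^ 2 / (2 + σ)) with he2
  have hsub : {ω | ∃ u v : Fin k,
        ((Finset.univ.filter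
            (fun i : Fin n => B i ω = true ∧ X i ω ∈ gridCell k u v)).card : ℝ)
            < (1 - σ) * (n * (1 - q) / k ^ 2) ∨
        ((Finset.univ.filter
            (fun i : Fin n => B i ω = true ∧ X i ω ∈ gridCell k u v)).card : ℝ)
            > (1 + σ) * (n * (1 - q) / k ^ 2)}
      ⊆ ⋃ u : Fin k, ⋃ v : Fin k,
        ({ω | (∑ i, (A u v i).indicator (fun _ => (1:ℝ))) ω ≤ (1-σ)*(n*p)} ∪
         {ω | (1+σ)*(n*p) ≤ (∑ i, (A u v i).indicator (fun _ => (1:ℝ))) ω}) := by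
    intro ω hω
    obtain ⟨u, v, h⟩ := hω
    rw [Set.mem_iUnion]
    refine ⟨u, Set.mem_iUnion.2 ⟨v, ?_⟩⟩
    rcases h with h | h
    · left
      rw [Set.mem_setOf_eq, ← hcard u v ω]
      rw [hμ] at h
      exact le_of_lt h
    · right
      rw [Set.mem_setOf_eq, ← hcard u v ω]
      rw [hμ] at h
      exact le_of_lt h
  calc ℙ _ ≤ ℙ (⋃ u : Fin k, ⋃ v : Fin k,
        ({ω | (∑ i, (A u v i).indicator (fun _ => (1:ℝ))) ω ≤ (1-σ)*(n*p)} ∪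
         {ω | (1+σ)*(n*p) ≤ (∑ i, (A u v i).indicator (fun _ => (1:ℝ))) ω})) :=
        measure_mono hsub
    _ ≤ ∑' u : Fin k, ℙ (⋃ v : Fin k,
        ({ω | (∑ i, (A u v i).indicator (fun _ => (1:ℝ))) ω ≤ (1-σ)*(n*p)} ∪
         {ω | (1+σ)*(n*p) ≤ (∑ i, (A u v i).indicator (fun _ => (1:ℝ))) ω})) :=
        measure_iUnion_le _
    _ ≤ ∑' u : Fin k, ∑' v : Fin k, (ENNReal.ofReal e1 + ENNReal.ofReal e2) := by
        apply ENNReal.tsum_le_tsum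
        intro u
        refine le_trans (measure_iUnion_le _) (ENNReal.tsum_le_tsum fun v => ?_)
        refine le_trans (measure_union_le _ _) ?_
        exact add_le_add
          (chernoff_low ℙ (A u v) (hAmeas u v) (hiset u v) hp0 hp1 (hpA u v) hσ)
          (chernoff_high ℙ (A u v) (hAmeas u v) (hiset u v) hp0 hp1 (hpA u v) hσ)
    _ = (k : ENNReal) * ((k : ENNReal) * (ENNReal.ofReal e1 + ENNReal.ofReal e2)) := by
        rw [tsum_fintype, tsum_fintype] at *
        simp [Finset.sum_const, Finset.card_univ, mul_comm]
        ring
    _ = ENNReal.ofReal ((k : ℝ) ^ 2 *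
        (Real.exp (-(n * (1 - q) / k ^ 2) * σ ^ 2 / 2) +
         Real.exp (-(n * (1 - q) / k ^ 2) * σ ^ 2 / (2 + σ)))) := by
        rw [← ENNReal.ofReal_add (by positivity) (by positivity),
          ← ENNReal.ofReal_natCast k, ← ENNReal.ofReal_mul (by positivity),
          ← ENNReal.ofReal_mul (by positivity)]
        congr 1
        rw [he1, he2, hμ]
        ring

end AuxLemmas
end

section
/- Let n > 1 be a real number, q ∈ (0,1), and x > 0 a real number satisfying the capacity-balance equation n / log n = (n·(1−q) + x) / log(n + x), where log is the natural logarithm. Then x > n·q. In other words, to restore the failure-free capacity, the number of redundant nodes must strictly exceed the expected number n·q of failed nodes, i.e., x = ε·n·q with ε > 1. -/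
/-- **Redundant nodes must exceed the expected number of failed nodes.**
If `n > 1`, `q ∈ (0,1)`, and `x > 0` satisfies the capacity-balance equation
`n / log n = (n (1−q) + x) / log (n + x)`, then `x > n q`: restoring the
failure-free capacity requires strictly more than `n q` redundant nodes,
i.e. `x = ε n q` with `ε > 1`. -/
theorem stmt_12 (n q x : ℝ) (hn : 1 < n) (hq : q ∈ Set.Ioo (0 : ℝ) 1) (hx : 0 < x)
    (hbal : n / Real.log n = (n * (1 - q) + x) / Real.log (n + x)) :
    x > n * q := by
  obtain ⟨hq0, hq1⟩ := hq
  by_contra h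
  push_neg at h
  have hn0 : (0:ℝ) < n := by linarith
  have hlogn : 0 < Real.log n := Real.log_pos hn
  have hlt : Real.log n < Real.log (n + x) := Real.log_lt_log hn0 (by linarith)
  have hnum : n * (1 - q) + x ≤ n := by nlinarith
  have hnumpos : 0 < n * (1 - q) + x := by nlinarith
  have h1 : (n * (1 - q) + x) / Real.log (n + x) < n / Real.log n := by
    calc (n * (1 - q) + x) / Real.log (n + x) ≤ n / Real.log (n + x) :=
          div_le_div_of_nonneg_right hnum (by linarith) |>.trans_eq rfl
      _ < n / Real.log n := div_lt_div_of_pos_left hn0 hlogn hlt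
  linarith [hbal ▸ h1]
end
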